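/- Suppose an all-pay policy evenly splits a per-round budget β > 0 among all participants and all n players always participate, each receiving β/n per round. Then the Nakamoto coefficient with threshold τ never decreases over time: d(σ^{t+1}) ≥ d(σ^t) for all t. -/

import Mathlib

open Finset

/-- Nakamoto coefficient of the stake profile `σ` restricted to the player set `N`,
with threshold `τ`: the minimum size of a coalition `C ⊆ N` whose total stake strictly
exceeds `τ` times the total stake of `N`. -/
noncomputable def nakamoto {n : ℕ} (σ : Fin n → ℝ) (N : Finset (Fin n)) (τ : ℝ) : ℕ :=
  sInf {k : ℕ | ∃ C ⊆ N, C.card = k ∧ τ * ∑ j ∈ N, σ j < ∑ j ∈ C, σ j}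

/-- averaging: there is a `k`-subset carrying at least `k / |N|` of the total. -/
lemma topk {n : ℕ} (f : Fin n → ℝ) :
    ∀ (k : ℕ) (N : Finset (Fin n)), (∀ j ∈ N, 0 ≤ f j) → k ≤ N.card →
      ∃ C ⊆ N, C.card = k ∧ (k : ℝ) * ∑ j ∈ N, f j ≤ (N.card : ℝ) * ∑ j ∈ C, f j := by
  intro k
  induction k with
  | zero => exact fun N _ _ => ⟨∅, empty_subset _, card_empty, by simp⟩
  | succ k ih =>
    intro N hf hk
    have hN : N.Nonempty := card_pos.mp (by omega)
    obtain ⟨x, hx, hxmax⟩ : ∃ x ∈ N, ∑ j ∈ N, f j ≤ (N.card : ℝ) * f x := by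
      obtain ⟨x, hx, h⟩ := Finset.exists_le_of_sum_le (f := fun _ => ∑ j ∈ N, f j)
        (g := fun i => (N.card : ℝ) * f i) hN (by rw [Finset.sum_const, ← Finset.mul_sum]; push_cast; ring_nf; rfl)
      exact ⟨x, hx, h⟩
    have hcard : k ≤ (N.erase x).card := by
      rw [card_erase_of_mem hx]; omega
    obtain ⟨C, hCsub, hCcard, hCsum⟩ := ih (N.erase x)
      (fun j hj => hf j (mem_erase.mp hj).2) hcard
    have hxC : x ∉ C := fun h => (mem_erase.mp (hCsub h)).1 rfl
    refine ⟨insert x C, ?_, ?_, ?_⟩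
    · exact insert_subset hx (hCsub.trans (erase_subset _ _))
    · rw [card_insert_of_notMem hxC, hCcard]
    · rw [Finset.sum_insert hxC]
      have herase : ∑ j ∈ N.erase x, f j = ∑ j ∈ N, f j - f x :=
        Finset.sum_erase_eq_sub hx
      have hce : ((N.erase x).card : ℝ) = (N.card : ℝ) - 1 := by
        rw [card_erase_of_mem hx]
        have : 1 ≤ N.card := by omega
        push_cast [Nat.cast_sub this]; ring
      rw [herase, hce] at hCsum
      have hs : 0 ≤ ∑ j ∈ C, f j :=
        Finset.sum_nonneg fun j hj => hf j ((hCsub.trans (erase_subset _ _)) hj)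
      have hm : (k : ℝ) + 1 ≤ (N.card : ℝ) := by exact_mod_cast hk
      rcases Nat.eq_zero_or_pos k with hk0 | hk1
      · subst hk0
        have : C = ∅ := card_eq_zero.mp hCcard
        subst this
        simp only [Finset.sum_empty, add_zero]
        push_cast
        linarith
      · have hm2 : (2 : ℝ) ≤ (N.card : ℝ) := by
          have : 2 ≤ N.card := by omega
          exact_mod_cast this
        have hm1 : (0:ℝ) < (N.card : ℝ) - 1 := by linarith
        have key : 0 ≤ ((N.card:ℝ) - 1) *
            ((N.card:ℝ) * (f x + ∑ j ∈ C, f j) - ((k:ℝ)+1) * ∑ j ∈ N, f j) := by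
          nlinarith [mul_nonneg (show (0:ℝ) ≤ (N.card : ℝ) - 1 - k by linarith)
              (show (0:ℝ) ≤ (N.card : ℝ) * f x - ∑ j ∈ N, f j by linarith),
            mul_le_mul_of_nonneg_left hCsum (show (0:ℝ) ≤ (N.card:ℝ) by positivity)]
        push_cast
        nlinarith [key, hm1]

theorem stmt16 {n : ℕ} (hn : 0 < n) (τ : ℝ) (hτ0 : 0 < τ) (hτ1 : τ < 1)
    (β : ℝ) (hβ : 0 < β)
    (σ : ℕ → Fin n → ℝ) (hσ0 : ∀ i, 0 ≤ σ 0 i)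
    (hupd : ∀ t i, σ (t + 1) i = σ t i + β / n) :
    ∀ t : ℕ, nakamoto (σ t) Finset.univ τ ≤ nakamoto (σ (t + 1)) Finset.univ τ := by
  intro t
  have hnR : (0:ℝ) < n := by exact_mod_cast hn
  set c : ℝ := β / n with hc_def
  have hc : 0 < c := div_pos hβ hnR
  have hnonneg : ∀ s i, 0 ≤ σ s i := by
    intro s
    induction s with
    | zero => exact hσ0
    | succ s ih => intro i; rw [hupd]; exact add_nonneg (ih i) hc.le
  set S : ℝ := ∑ j, σ t j with hS_def
  have hS0 : 0 ≤ S := Finset.sum_nonneg fun j _ => hnonneg t j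
  -- sums at t+1
  have hsum1 : ∀ C : Finset (Fin n), ∑ j ∈ C, σ (t+1) j = (∑ j ∈ C, σ t j) + C.card * c := by
    intro C
    simp only [hupd, Finset.sum_add_distrib, Finset.sum_const, nsmul_eq_mul]
  have hcardu : (univ : Finset (Fin n)).card = n := by simp
  by_cases hS : S = 0
  · -- all stakes 0 at time t, set at t empty, nakamoto = 0
    have hzero : ∀ j ∈ (univ : Finset (Fin n)), σ t j = 0 :=
      (Finset.sum_eq_zero_iff_of_nonneg (fun j _ => hnonneg t j)).mp hS
    have : nakamoto (σ t) Finset.univ τ = 0 := by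
      unfold nakamoto
      convert Nat.sInf_empty
      rw [Set.eq_empty_iff_forall_notMem]
      rintro k ⟨C, hCsub, -, hlt⟩
      have h1 : ∑ j ∈ C, σ t j = 0 := Finset.sum_eq_zero fun j hj => hzero j (hCsub hj)
      rw [h1, ← hS_def, hS, mul_zero] at hlt
      exact lt_irrefl 0 hlt
    rw [this]; exact Nat.zero_le _
  · have hSpos : 0 < S := lt_of_le_of_ne hS0 (Ne.symm hS)
    -- the set at t+1 is nonempty: univ works
    have hne : {k : ℕ | ∃ C ⊆ (univ : Finset (Fin n)), C.card = k ∧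
        τ * ∑ j ∈ univ, σ (t+1) j < ∑ j ∈ C, σ (t+1) j}.Nonempty := by
      refine ⟨n, univ, Finset.Subset.refl _, hcardu, ?_⟩
      have hpos : 0 < ∑ j ∈ univ, σ (t+1) j := by
        rw [hsum1, hcardu]
        nlinarith
      nlinarith
    have hmem := Nat.sInf_mem hne
    obtain ⟨C, hCsub, hCcard, hClt⟩ := hmem
    show nakamoto (σ t) Finset.univ τ ≤ sInf _
    unfold nakamoto
    apply Nat.sInf_le
    rw [hsum1, hsum1, hcardu] at hClt
    have hmn : C.card ≤ n := by simpa using Finset.card_le_univ C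
    by_cases hcase : (C.card : ℝ) ≤ τ * n
    · -- same coalition works at time t
      refine ⟨C, hCsub, hCcard, ?_⟩
      have hmc : (C.card : ℝ) * c ≤ τ * n * c :=
        mul_le_mul_of_nonneg_right hcase hc.le
      nlinarith
    · push_neg at hcase
      obtain ⟨C', hC'sub, hC'card, hC'sum⟩ := topk (σ t) C.card univ
        (fun j _ => hnonneg t j) (by rw [hcardu]; exact hmn)
      refine ⟨C', hC'sub, by rw [hC'card]; exact hCcard, ?_⟩
      rw [hcardu] at hC'sum
      nlinarith
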